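/- Suppose x ∈ ℝⁿ satisfies (L_f + L_G)·‖x‖ = σ. Then for every consistent pair (f̂, Ĝ) there exists u ∈ ℝᵐ with ‖u‖ ≤ 1 such that f₀ = f̂(x) + Ĝ(x)·u; that is, f₀ belongs to the guaranteed velocity set V^G_x. -/

import Mathlib

open Matrix Set

noncomputable def matOpNorm {n m : ℕ} (M : Matrix (Fin n) (Fin m) ℝ) : ℝ :=
  ‖LinearMap.toContinuousLinearMap (Matrix.toEuclideanLin M)‖

noncomputable def appMat {n m : ℕ} (M : Matrix (Fin n) (Fin m) ℝ)
    (v : EuclideanSpace ℝ (Fin m)) : EuclideanSpace ℝ (Fin n) :=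
  Matrix.toEuclideanLin M v

noncomputable def colSpace {n m : ℕ} (M : Matrix (Fin n) (Fin m) ℝ) :
    Submodule ℝ (EuclideanSpace ℝ (Fin n)) :=
  LinearMap.range (Matrix.toEuclideanLin M)

noncomputable def minSV {n m : ℕ} (M : Matrix (Fin n) (Fin m) ℝ) : ℝ :=
  Real.sqrt (sInf {μ : ℝ | μ ≠ 0 ∧
    ∃ i, (show (Mᵀ * M).IsHermitian by
      simpa [Matrix.conjTranspose_eq_transpose_of_trivial] using
        Matrix.isHermitian_conjTranspose_mul_self M).eigenvalues i = μ})

/-- A pair `(fh, Gh)` consistent with the prior knowledge of the dynamics. -/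
structure Consistent {n m : ℕ} (R : Matrix (Fin n) (Fin m) ℝ) (Lf LG : ℝ)
    (f₀ : EuclideanSpace ℝ (Fin n)) (G₀ : Matrix (Fin n) (Fin m) ℝ)
    (fh : EuclideanSpace ℝ (Fin n) → EuclideanSpace ℝ (Fin n))
    (Gh : EuclideanSpace ℝ (Fin n) → Matrix (Fin n) (Fin m) ℝ) : Prop where
  lipf : ∀ y z, ‖fh y - fh z‖ ≤ Lf * ‖y - z‖
  lipG : ∀ y z, matOpNorm (Gh y - Gh z) ≤ LG * ‖y - z‖
  f_zero : fh 0 = f₀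
  G_zero : Gh 0 = G₀
  f_im : ∀ y, fh y ∈ colSpace R
  factor : ∃ Hh : EuclideanSpace ℝ (Fin n) → Matrix (Fin m) (Fin m) ℝ,
    IsUnit (Hh 0) ∧ ∀ y, Gh y = R * Hh y

/-- The guaranteed velocity set at `x`. -/
noncomputable def GVS {n m : ℕ} (R : Matrix (Fin n) (Fin m) ℝ) (Lf LG : ℝ)
    (f₀ : EuclideanSpace ℝ (Fin n)) (G₀ : Matrix (Fin n) (Fin m) ℝ)
    (x : EuclideanSpace ℝ (Fin n)) : Set (EuclideanSpace ℝ (Fin n)) :=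
  ⋂ (fh : EuclideanSpace ℝ (Fin n) → EuclideanSpace ℝ (Fin n))
    (Gh : EuclideanSpace ℝ (Fin n) → Matrix (Fin n) (Fin m) ℝ)
    (_ : Consistent R Lf LG f₀ G₀ fh Gh),
      {w | ∃ u : EuclideanSpace ℝ (Fin m), ‖u‖ ≤ 1 ∧ w = fh x + appMat (Gh x) u}

open RealInnerProductSpace in
private lemma toEucMulApply {p q r : ℕ} (M : Matrix (Fin p) (Fin q) ℝ)
    (N : Matrix (Fin q) (Fin r) ℝ) (v : EuclideanSpace ℝ (Fin r)) :
    Matrix.toEuclideanLin (M * N) v = Matrix.toEuclideanLin M (Matrix.toEuclideanLin N v) := by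
  simp [Matrix.toEuclideanLin_apply, Matrix.mulVec_mulVec]

open RealInnerProductSpace in
theorem corollary1_boundary' {n m : ℕ} (R : Matrix (Fin n) (Fin m) ℝ)
    (Lf LG : ℝ) (hLf : 0 < Lf) (hLG : 0 < LG)
    (f₀ : EuclideanSpace ℝ (Fin n)) (hf₀ : f₀ ∈ colSpace R)
    (H₀ : Matrix (Fin m) (Fin m) ℝ) (hH₀ : IsUnit H₀)
    (G₀ : Matrix (Fin n) (Fin m) ℝ) (hG₀fac : G₀ = R * H₀) (hG₀ : G₀ ≠ 0)
    (x : EuclideanSpace ℝ (Fin n)) (hx : (Lf + LG) * ‖x‖ = minSV G₀) :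
    (∀ fh Gh, Consistent R Lf LG f₀ G₀ fh Gh →
      ∃ u : EuclideanSpace ℝ (Fin m), ‖u‖ ≤ 1 ∧ f₀ = fh x + appMat (Gh x) u) := by
  classical
  set A : EuclideanSpace ℝ (Fin m) →ₗ[ℝ] EuclideanSpace ℝ (Fin n) :=
    Matrix.toEuclideanLin G₀ with hAdef
  set μ : Fin m → ℝ := (show (G₀ᵀ * G₀).IsHermitian by simpa [Matrix.conjTranspose_eq_transpose_of_trivial] using Matrix.isHermitian_conjTranspose_mul_self G₀).eigenvalues with hμdef
  set b := (show (G₀ᵀ * G₀).IsHermitian by simpa [Matrix.conjTranspose_eq_transpose_of_trivial] using Matrix.isHermitian_conjTranspose_mul_self G₀).eigenvectorBasis with hbdef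
  have hμnn : ∀ i, 0 ≤ μ i := fun i => G₀.eigenvalues_conjTranspose_mul_self_nonneg i
  have hTb : ∀ i, Matrix.toEuclideanLin (G₀ᴴ * G₀) (b i) = μ i • b i := by
    intro i
    exact PiLp.ext fun j =>
      congrFun ((show (G₀ᵀ * G₀).IsHermitian by simpa [Matrix.conjTranspose_eq_transpose_of_trivial] using Matrix.isHermitian_conjTranspose_mul_self G₀).mulVec_eigenvectorBasis i) j
  have hkey : ∀ (i : Fin m) (v : EuclideanSpace ℝ (Fin m)),
      ⟪A (b i), A v⟫ = μ i * ⟪b i, v⟫ := by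
    intro i v
    have h1 : LinearMap.adjoint A (A (b i)) = μ i • b i := by
      rw [hAdef, ← Matrix.toEuclideanLin_conjTranspose_eq_adjoint, ← toEucMulApply]
      exact hTb i
    calc ⟪A (b i), A v⟫ = ⟪LinearMap.adjoint A (A (b i)), v⟫ :=
          (LinearMap.adjoint_inner_left A v (A (b i))).symm
      _ = ⟪μ i • b i, v⟫ := by rw [h1]
      _ = μ i * ⟪b i, v⟫ := real_inner_smul_left _ _ _
  have hbb : ∀ i j : Fin m, ⟪b i, b j⟫ = if i = j then 1 else 0 :=
    orthonormal_iff_ite.mp b.orthonormal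
  have hAb0 : ∀ i, μ i = 0 → A (b i) = 0 := by
    intro i h
    have h2 := hkey i (b i)
    rw [h, zero_mul] at h2
    exact inner_self_eq_zero.mp h2
  set S : Set ℝ := {y : ℝ | y ≠ 0 ∧
      ∃ i, (show (G₀ᵀ * G₀).IsHermitian by simpa [Matrix.conjTranspose_eq_transpose_of_trivial] using Matrix.isHermitian_conjTranspose_mul_self G₀).eigenvalues i = y} with hSdef
  have hSfin : S.Finite := by
    apply (Set.finite_range μ).subset
    rintro y ⟨_, i, rfl⟩
    exact ⟨i, rfl⟩
  have hSpos : ∀ y ∈ S, 0 < y := by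
    rintro y ⟨hy0, i, rfl⟩
    exact lt_of_le_of_ne (hμnn i) (Ne.symm hy0)
  have hSne : S.Nonempty := by
    by_contra h
    have hall : ∀ i, μ i = 0 := by
      intro i
      by_contra hi
      exact h ⟨μ i, hi, i, rfl⟩
    have hA0 : A = 0 := by
      apply LinearMap.ext; intro v
      conv_lhs => rw [← b.sum_repr' v]
      rw [map_sum]
      simp only [_root_.map_smul]
      simp [fun i => hAb0 i (hall i)]
    have hG0 : G₀ = 0 := by
      have := hA0
      rw [hAdef] at this
      exact (LinearEquiv.map_eq_zero_iff _).mp this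
    exact hG₀ hG0
  have hInfmem : sInf S ∈ S := hSne.csInf_mem hSfin
  have hInfpos : 0 < sInf S := hSpos _ hInfmem
  have hσeq : minSV G₀ = Real.sqrt (sInf S) := rfl
  set σ := minSV G₀ with hσdef
  have hσpos : 0 < σ := by rw [hσeq]; exact Real.sqrt_pos.mpr hInfpos
  have hσsq : σ ^ 2 = sInf S := by rw [hσeq]; exact Real.sq_sqrt hInfpos.le
  have hμσ : ∀ i, μ i ≠ 0 → σ ^ 2 ≤ μ i := by
    intro i hi
    rw [hσsq]
    exact csInf_le hSfin.bddBelow ⟨hi, i, rfl⟩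
  have hxpos : 0 < ‖x‖ := by
    rcases (norm_nonneg x).lt_or_eq with h | h
    · exact h
    · exfalso
      rw [← h, mul_zero] at hx
      exact absurd hx.symm (ne_of_gt hσpos)
  -- the pseudoinverse
  set s : Finset (Fin m) := Finset.univ.filter (fun i => μ i ≠ 0) with hsdef
  obtain ⟨Pc, hPcdef⟩ : ∃ Pc : EuclideanSpace ℝ (Fin n) →L[ℝ] EuclideanSpace ℝ (Fin m),
      Pc = ∑ i ∈ s, (μ i)⁻¹ • ((innerSL ℝ (A (b i))).smulRight (b i)) := ⟨_, rfl⟩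
  have hPc_apply : ∀ w, Pc w = ∑ i ∈ s, ((μ i)⁻¹ * ⟪A (b i), w⟫) • b i := by
    intro w
    rw [hPcdef]
    rw [ContinuousLinearMap.sum_apply]
    refine Finset.sum_congr rfl fun i _ => ?_
    rw [ContinuousLinearMap.smul_apply, ContinuousLinearMap.smulRight_apply, innerSL_apply_apply,
      smul_smul]
  have hPA : ∀ z ∈ LinearMap.range A, A (Pc z) = z := by
    rintro _ ⟨v, rfl⟩
    rw [hPc_apply]
    have hcongr : ∀ i ∈ s, ((μ i)⁻¹ * ⟪A (b i), A v⟫) • b i = ⟪b i, v⟫ • b i := by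
      intro i hi
      have hi' : μ i ≠ 0 := by simpa [hsdef] using hi
      rw [hkey, ← mul_assoc, inv_mul_cancel₀ hi', one_mul]
    rw [Finset.sum_congr rfl hcongr]
    calc A (∑ i ∈ s, ⟪b i, v⟫ • b i) = ∑ i ∈ s, ⟪b i, v⟫ • A (b i) := by
          rw [map_sum]; simp only [_root_.map_smul]
      _ = ∑ i : Fin m, ⟪b i, v⟫ • A (b i) := by
          apply Finset.sum_subset (Finset.subset_univ s)
          intro i _ hi
          have h0 : μ i = 0 := by simpa [hsdef] using hi
          rw [hAb0 i h0, smul_zero]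
      _ = A (∑ i : Fin m, ⟪b i, v⟫ • b i) := by rw [map_sum]; simp only [_root_.map_smul]
      _ = A v := by rw [b.sum_repr' v]
  have hPnorm : ∀ w, ‖Pc w‖ ≤ σ⁻¹ * ‖w‖ := by
    intro w
    have h2 : ‖Pc w‖ ^ 2 = ∑ i ∈ s, ((μ i)⁻¹ * ⟪A (b i), w⟫) ^ 2 := by
      rw [← real_inner_self_eq_norm_sq, hPc_apply w, sum_inner]
      refine Finset.sum_congr rfl fun i hi => ?_
      rw [real_inner_smul_left,
        b.orthonormal.inner_right_sum (fun j => (μ j)⁻¹ * ⟪A (b j), w⟫) hi]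
      ring
    set d : {i : Fin m // μ i ≠ 0} → EuclideanSpace ℝ (Fin n) :=
      fun i => (Real.sqrt (μ i.1))⁻¹ • A (b i.1) with hddef
    have hdo : Orthonormal ℝ d := by
      rw [orthonormal_iff_ite]
      intro i j
      rw [hddef]
      simp only [real_inner_smul_left, real_inner_smul_right]
      rw [hkey, hbb]
      by_cases h : (i : Fin m) = (j : Fin m)
      · have hij : i = j := Subtype.ext h
        subst hij
        have hμpos : 0 < μ i.1 := lt_of_le_of_ne (hμnn i.1) (Ne.symm i.2)
        rw [if_pos rfl, if_pos rfl]
        rw [mul_one]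
        rw [← mul_assoc, ← mul_inv, Real.mul_self_sqrt hμpos.le]
        exact inv_mul_cancel₀ i.2
      · rw [if_neg h, if_neg (fun hc => h (congrArg Subtype.val hc))]
        ring
    have hbessel : ∑ i : {i : Fin m // μ i ≠ 0}, ⟪d i, w⟫ ^ 2 ≤ ‖w‖ ^ 2 := by
      have hb2 := hdo.sum_inner_products_le (s := Finset.univ) w
      simpa [Real.norm_eq_abs, sq_abs] using hb2
    have hsum_eq : ∑ i ∈ s, ((μ i)⁻¹ * ⟪A (b i), w⟫) ^ 2
        = ∑ i : {i : Fin m // μ i ≠ 0}, ((μ i.1)⁻¹ * ⟪A (b i.1), w⟫) ^ 2 := by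
      exact Finset.sum_subtype s (by intro i; simp [hsdef]) _
    have hterm : ∀ i : {i : Fin m // μ i ≠ 0},
        ((μ i.1)⁻¹ * ⟪A (b i.1), w⟫) ^ 2 ≤ σ⁻¹ ^ 2 * ⟪d i, w⟫ ^ 2 := by
      intro i
      have hμpos : 0 < μ i.1 := lt_of_le_of_ne (hμnn i.1) (Ne.symm i.2)
      have hσ2 : σ ^ 2 ≤ μ i.1 := hμσ _ i.2
      have hinv : (μ i.1)⁻¹ ≤ (σ ^ 2)⁻¹ := inv_anti₀ (by positivity) hσ2
      have hdw : ⟪d i, w⟫ = (Real.sqrt (μ i.1))⁻¹ * ⟪A (b i.1), w⟫ := by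
        rw [hddef]; exact real_inner_smul_left _ _ _
      have hsq : ((Real.sqrt (μ i.1))⁻¹) ^ 2 = (μ i.1)⁻¹ := by
        rw [inv_pow, Real.sq_sqrt hμpos.le]
      rw [hdw, mul_pow, mul_pow, hsq]
      have h3 := mul_le_mul_of_nonneg_right hinv
        (mul_nonneg (inv_nonneg.2 hμpos.le) (sq_nonneg (⟪A (b i.1), w⟫)))
      calc ((μ i.1)⁻¹) ^ 2 * ⟪A (b i.1), w⟫ ^ 2
          = (μ i.1)⁻¹ * ((μ i.1)⁻¹ * ⟪A (b i.1), w⟫ ^ 2) := by ring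
        _ ≤ (σ ^ 2)⁻¹ * ((μ i.1)⁻¹ * ⟪A (b i.1), w⟫ ^ 2) := h3
        _ = σ⁻¹ ^ 2 * ((μ i.1)⁻¹ * ⟪A (b i.1), w⟫ ^ 2) := by rw [← inv_pow]
    have h4 : ‖Pc w‖ ^ 2 ≤ (σ⁻¹ * ‖w‖) ^ 2 := by
      rw [h2, hsum_eq, mul_pow]
      calc ∑ i : {i : Fin m // μ i ≠ 0}, ((μ i.1)⁻¹ * ⟪A (b i.1), w⟫) ^ 2
          ≤ ∑ i : {i : Fin m // μ i ≠ 0}, σ⁻¹ ^ 2 * ⟪d i, w⟫ ^ 2 :=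
            Finset.sum_le_sum fun i _ => hterm i
        _ = σ⁻¹ ^ 2 * ∑ i : {i : Fin m // μ i ≠ 0}, ⟪d i, w⟫ ^ 2 := by
            rw [Finset.mul_sum]
        _ ≤ σ⁻¹ ^ 2 * ‖w‖ ^ 2 := by
            exact mul_le_mul_of_nonneg_left hbessel (by positivity)
    have h5 := Real.sqrt_le_sqrt h4
    rwa [Real.sqrt_sq (norm_nonneg _), Real.sqrt_sq (by positivity)] at h5
  have hrange : LinearMap.range A = colSpace R := by
    obtain ⟨U, hU⟩ := hH₀
    apply le_antisymm
    · rintro _ ⟨v, rfl⟩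
      have hAv : A v = Matrix.toEuclideanLin R (Matrix.toEuclideanLin H₀ v) := by
        rw [hAdef, hG₀fac]; exact toEucMulApply _ _ _
      rw [hAv]
      exact LinearMap.mem_range_self _ _
    · rintro _ ⟨v, rfl⟩
      refine ⟨Matrix.toEuclideanLin (↑U⁻¹ : Matrix (Fin m) (Fin m) ℝ) v, ?_⟩
      rw [hAdef, ← toEucMulApply, hG₀fac, Matrix.mul_assoc, ← hU, Units.mul_inv,
        Matrix.mul_one]
  -- main argument
  intro fh Gh hc
  obtain ⟨Hh, hHh0, hfac⟩ := hc.factor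
  obtain ⟨Δc, hΔdef⟩ : ∃ Δc : EuclideanSpace ℝ (Fin m) →L[ℝ] EuclideanSpace ℝ (Fin n),
      Δc = LinearMap.toContinuousLinearMap (Matrix.toEuclideanLin (Gh x - G₀)) := ⟨_, rfl⟩
  have hΔnorm : ‖Δc‖ ≤ LG * ‖x‖ := by
    have h := hc.lipG x 0
    rw [hc.G_zero, sub_zero] at h
    rw [hΔdef]
    exact h
  have hΔapply : ∀ u, Δc u = Matrix.toEuclideanLin (Gh x) u - A u := by
    intro u
    rw [hΔdef]
    show Matrix.toEuclideanLin (Gh x - G₀) u = _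
    rw [map_sub, LinearMap.sub_apply, hAdef]
  have hΔmem : ∀ u, Δc u ∈ colSpace R := by
    intro u
    have h1 : Gh x - G₀ = R * (Hh x - H₀) := by rw [hfac x, hG₀fac, Matrix.mul_sub]
    have h2 : Δc u = Matrix.toEuclideanLin R (Matrix.toEuclideanLin (Hh x - H₀) u) := by
      rw [hΔdef]
      show Matrix.toEuclideanLin (Gh x - G₀) u = _
      rw [h1]; exact toEucMulApply _ _ _
    rw [h2]
    exact LinearMap.mem_range_self _ _
  obtain ⟨Sc, hScdef⟩ : ∃ Sc : EuclideanSpace ℝ (Fin m) →L[ℝ] EuclideanSpace ℝ (Fin m),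
      Sc = Pc.comp Δc := ⟨_, rfl⟩
  have hSc_apply : ∀ u, Sc u = Pc (Δc u) := fun u => by rw [hScdef]; rfl
  have hSnorm : ‖Sc‖ ≤ σ⁻¹ * (LG * ‖x‖) := by
    apply ContinuousLinearMap.opNorm_le_bound _ (by positivity)
    intro u
    calc ‖Sc u‖ = ‖Pc (Δc u)‖ := by rw [hSc_apply]
      _ ≤ σ⁻¹ * ‖Δc u‖ := hPnorm _
      _ ≤ σ⁻¹ * (‖Δc‖ * ‖u‖) := by
          exact mul_le_mul_of_nonneg_left (Δc.le_opNorm u) (by positivity)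
      _ ≤ σ⁻¹ * ((LG * ‖x‖) * ‖u‖) := by
          exact mul_le_mul_of_nonneg_left
            (mul_le_mul_of_nonneg_right hΔnorm (norm_nonneg u)) (by positivity)
      _ = σ⁻¹ * (LG * ‖x‖) * ‖u‖ := by ring
  have hSlt : ‖Sc‖ < 1 := by
    have hlt : LG * ‖x‖ < σ := by
      have h1 : LG * ‖x‖ < (Lf + LG) * ‖x‖ :=
        mul_lt_mul_of_pos_right (by linarith) hxpos
      rw [hx] at h1
      exact h1
    calc ‖Sc‖ ≤ σ⁻¹ * (LG * ‖x‖) := hSnorm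
      _ < σ⁻¹ * σ := by exact mul_lt_mul_of_pos_left hlt (by positivity)
      _ = 1 := inv_mul_cancel₀ hσpos.ne'
  have hneg : ‖-Sc‖ < 1 := by rwa [norm_neg]
  obtain ⟨w₀, hw₀def⟩ : ∃ w₀ : EuclideanSpace ℝ (Fin n), w₀ = f₀ - fh x := ⟨_, rfl⟩
  have hw₀mem : w₀ ∈ colSpace R := hw₀def ▸ Submodule.sub_mem _ hf₀ (hc.f_im x)
  have hw₀norm : ‖w₀‖ ≤ Lf * ‖x‖ := by
    have h := hc.lipf 0 x
    rw [hc.f_zero, zero_sub, norm_neg] at h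
    rw [hw₀def]
    exact h
  obtain ⟨U1, hU1def⟩ : ∃ U1 : (EuclideanSpace ℝ (Fin m) →L[ℝ] EuclideanSpace ℝ (Fin m))ˣ,
      U1 = Units.oneSub (-Sc) hneg := ⟨_, rfl⟩
  obtain ⟨u, hudef⟩ : ∃ u : EuclideanSpace ℝ (Fin m),
      u = (↑U1⁻¹ : EuclideanSpace ℝ (Fin m) →L[ℝ] EuclideanSpace ℝ (Fin m)) (Pc w₀) := ⟨_, rfl⟩
  have hu1 : (↑U1 : EuclideanSpace ℝ (Fin m) →L[ℝ] EuclideanSpace ℝ (Fin m)) u = Pc w₀ := by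
    rw [hudef]
    have hmul : (↑U1 * ↑U1⁻¹ :
        EuclideanSpace ℝ (Fin m) →L[ℝ] EuclideanSpace ℝ (Fin m)) = 1 := U1.mul_inv
    calc (↑U1 : EuclideanSpace ℝ (Fin m) →L[ℝ] EuclideanSpace ℝ (Fin m))
          ((↑U1⁻¹ : EuclideanSpace ℝ (Fin m) →L[ℝ] EuclideanSpace ℝ (Fin m)) (Pc w₀))
        = (↑U1 * ↑U1⁻¹ :
            EuclideanSpace ℝ (Fin m) →L[ℝ] EuclideanSpace ℝ (Fin m)) (Pc w₀) := rfl
      _ = Pc w₀ := by rw [hmul]; rfl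
  have hval : (↑U1 : EuclideanSpace ℝ (Fin m) →L[ℝ] EuclideanSpace ℝ (Fin m)) = 1 + Sc := by
    rw [hU1def]
    show 1 - (-Sc) = 1 + Sc
    rw [sub_neg_eq_add]
  have hfix : u = Pc w₀ - Sc u := by
    rw [hval] at hu1
    have : u + Sc u = Pc w₀ := by
      rw [← hu1]
      rfl
    rw [← this]
    abel
  have hufix2 : u = Pc (w₀ - Δc u) := by
    rw [map_sub, ← hSc_apply]
    exact hfix
  have hz : w₀ - Δc u ∈ LinearMap.range A := by
    rw [hrange]
    exact Submodule.sub_mem _ hw₀mem (hΔmem u)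
  have hAu : A u = w₀ - Δc u := by
    conv_lhs => rw [hufix2]
    exact hPA _ hz
  have hGhu : Matrix.toEuclideanLin (Gh x) u = w₀ := by
    calc Matrix.toEuclideanLin (Gh x) u = A u + Δc u := by rw [hΔapply]; abel
      _ = w₀ := by rw [hAu]; abel
  have hunorm : ‖u‖ ≤ 1 := by
    have h5 : ‖u‖ ≤ σ⁻¹ * (Lf * ‖x‖) + σ⁻¹ * (LG * ‖x‖) * ‖u‖ := by
      calc ‖u‖ = ‖Pc w₀ - Sc u‖ := by rw [← hfix]
        _ ≤ ‖Pc w₀‖ + ‖Sc u‖ := norm_sub_le _ _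
        _ ≤ σ⁻¹ * (Lf * ‖x‖) + σ⁻¹ * (LG * ‖x‖) * ‖u‖ := by
            apply add_le_add
            · exact le_trans (hPnorm w₀)
                (mul_le_mul_of_nonneg_left hw₀norm (by positivity))
            · exact le_trans (Sc.le_opNorm u)
                (mul_le_mul_of_nonneg_right hSnorm (norm_nonneg u))
    have h6 : σ * ‖u‖ ≤ Lf * ‖x‖ + LG * ‖x‖ * ‖u‖ := by
      have h7 := mul_le_mul_of_nonneg_left h5 hσpos.le
      calc σ * ‖u‖ ≤ σ * (σ⁻¹ * (Lf * ‖x‖) + σ⁻¹ * (LG * ‖x‖) * ‖u‖) := h7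
        _ = Lf * ‖x‖ + LG * ‖x‖ * ‖u‖ := by field_simp
    have hpos : 0 < Lf * ‖x‖ := mul_pos hLf hxpos
    have h8 : σ * ‖u‖ = Lf * ‖x‖ * ‖u‖ + LG * ‖x‖ * ‖u‖ := by rw [← hx]; ring
    rw [h8] at h6
    have h9 : Lf * ‖x‖ * ‖u‖ ≤ Lf * ‖x‖ * 1 := by linarith
    exact le_of_mul_le_mul_left h9 hpos
  refine ⟨u, hunorm, ?_⟩
  have happ : appMat (Gh x) u = w₀ := hGhu
  rw [happ, hw₀def]
  abel

/-- **Corollary 1.** If `(L_f + L_G)‖x‖ = σ`, then for every consistent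
pair `(f̂, Ĝ)` there is `u` with `‖u‖ ≤ 1` and `f₀ = f̂ x + Ĝ x · u`; that is,
`f₀` belongs to the guaranteed velocity set at `x`. -/
theorem corollary1_boundary {n m : ℕ} (R : Matrix (Fin n) (Fin m) ℝ)
    (Lf LG : ℝ) (hLf : 0 < Lf) (hLG : 0 < LG)
    (f₀ : EuclideanSpace ℝ (Fin n)) (hf₀ : f₀ ∈ colSpace R)
    (H₀ : Matrix (Fin m) (Fin m) ℝ) (hH₀ : IsUnit H₀)
    (G₀ : Matrix (Fin n) (Fin m) ℝ) (hG₀fac : G₀ = R * H₀) (hG₀ : G₀ ≠ 0)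
    (x : EuclideanSpace ℝ (Fin n)) (hx : (Lf + LG) * ‖x‖ = minSV G₀) :
    (∀ fh Gh, Consistent R Lf LG f₀ G₀ fh Gh →
      ∃ u : EuclideanSpace ℝ (Fin m), ‖u‖ ≤ 1 ∧ f₀ = fh x + appMat (Gh x) u) ∧
    f₀ ∈ GVS R Lf LG f₀ G₀ x := by
  have main := corollary1_boundary' R Lf LG hLf hLG f₀ hf₀ H₀ hH₀ G₀ hG₀fac hG₀ x hx
  refine ⟨main, ?_⟩
  simp only [GVS, Set.mem_iInter, Set.mem_setOf_eq]
  intro fh Gh hc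
  obtain ⟨u, hu, he⟩ := main fh Gh hc
  exact ⟨u, hu, he⟩
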